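/- Let G = (V, E) be a finite graph with edges colored red and blue, and suppose there is a weight function w: E → R with w > 0 on red edges, w < 0 on blue edges, and for every vertex v the sum of w over the edges incident to v equals 0. Then every edge of G belongs to a closed walk along which the colors of edges alternate red, blue, red, blue, ... -/

import Mathlib

variable {V : Type*}

/-- A list of colored edges is cyclically alternating: it is nonempty, consecutive edges
have different colors, and so do the last and the first edge. -/
def CyclicAlt (c : Sym2 V → Bool) (l : List (Sym2 V)) : Prop :=
  l ≠ [] ∧ List.Chain' (fun e f => c e ≠ c f) l ∧
    ∀ h : l ≠ [], c (l.getLast h) ≠ c (l.head h)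

/-- If a finite red/blue-edge-colored graph admits a weight function
that is positive on red edges, negative on blue edges, and sums to `0` over the edges
incident to every vertex, then every edge belongs to a closed walk with alternating
colors. -/
theorem every_edge_in_alternating_walk_of_weights [Fintype V] [DecidableEq V]
    (G : SimpleGraph V) [DecidableRel G.Adj] (c : Sym2 V → Bool) (w : Sym2 V → ℝ)
    (hred : ∀ e ∈ G.edgeSet, c e = true → 0 < w e)
    (hblue : ∀ e ∈ G.edgeSet, c e = false → w e < 0)
    (hsum : ∀ v : V, ∑ u ∈ G.neighborFinset v, w s(u, v) = 0) :
    ∀ e ∈ G.edgeSet, ∃ (v : V) (p : G.Walk v v), CyclicAlt c p.edges ∧ e ∈ p.edges := by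
  classical
  intro e he
  induction e using Sym2.inductionOn with
  | hf a bv =>
  rw [SimpleGraph.mem_edgeSet] at he
  set b₀ : Bool := c s(a, bv) with hb₀
  -- the "state" transition relation on directed edges
  set step : V × V → V × V → Prop := fun d d' =>
    d.2 = d'.1 ∧ G.Adj d'.1 d'.2 ∧ c s(d.1, d.2) ≠ c s(d'.1, d'.2) with hstep_def
  set d₀ : V × V := (a, bv) with hd₀_def
  -- the set of states reachable from d₀
  set S : Finset (V × V) :=
    Finset.univ.filter (fun d => G.Adj d.1 d.2 ∧ Relation.ReflTransGen step d₀ d) with hS_def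
  have hd₀S : d₀ ∈ S := by
    simp only [hS_def, Finset.mem_filter, Finset.mem_univ, true_and]
    exact ⟨he, Relation.ReflTransGen.refl⟩
  have hSclosed : ∀ d ∈ S, ∀ d', step d d' → d' ∈ S := by
    intro d hd d' hst
    simp only [hS_def, Finset.mem_filter, Finset.mem_univ, true_and] at hd ⊢
    exact ⟨hst.2.1, hd.2.tail hst⟩
  set f : V × V → ℝ := fun d => |w s(d.1, d.2)| with hf_def
  have hf0 : ∀ d, 0 ≤ f d := fun d => abs_nonneg _
  -- conservation of absolute weight per color at each vertex
  have hW : ∀ u : V, ∀ b : Bool,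
      ∑ y ∈ (G.neighborFinset u).filter (fun y => c s(u, y) = b), |w s(u, y)|
        = ∑ y ∈ (G.neighborFinset u).filter (fun y => c s(u, y) = !b), |w s(u, y)| := by
    have key : ∀ u : V,
        ∑ y ∈ (G.neighborFinset u).filter (fun y => c s(u, y) = true), |w s(u, y)|
          = ∑ y ∈ (G.neighborFinset u).filter (fun y => c s(u, y) = false), |w s(u, y)| := by
      intro u
      have h0 : ∑ y ∈ G.neighborFinset u, w s(u, y) = 0 := by
        have := hsum u
        rw [← this]
        exact Finset.sum_congr rfl fun y _ => by rw [Sym2.eq_swap]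
      have hsplit := Finset.sum_filter_add_sum_filter_not (G.neighborFinset u)
        (fun y => c s(u, y) = true) (fun y => w s(u, y))
      have hmemE : ∀ y ∈ G.neighborFinset u, s(u, y) ∈ G.edgeSet := by
        intro y hy
        rw [SimpleGraph.mem_neighborFinset] at hy
        exact hy
      have h1 : ∑ y ∈ (G.neighborFinset u).filter (fun y => c s(u, y) = true), |w s(u, y)|
          = ∑ y ∈ (G.neighborFinset u).filter (fun y => c s(u, y) = true), w s(u, y) := by
        refine Finset.sum_congr rfl fun y hy => ?_
        rw [Finset.mem_filter] at hy
        exact abs_of_pos (hred _ (hmemE y hy.1) hy.2)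
      have h2 : ∑ y ∈ (G.neighborFinset u).filter (fun y => c s(u, y) = false), |w s(u, y)|
          = - ∑ y ∈ (G.neighborFinset u).filter (fun y => c s(u, y) = false), w s(u, y) := by
        rw [← Finset.sum_neg_distrib]
        refine Finset.sum_congr rfl fun y hy => ?_
        rw [Finset.mem_filter] at hy
        exact abs_of_neg (hblue _ (hmemE y hy.1) hy.2)
      have h3 : (G.neighborFinset u).filter (fun y => ¬ (c s(u, y) = true))
          = (G.neighborFinset u).filter (fun y => c s(u, y) = false) := by
        refine Finset.filter_congr fun y _ => by simp
      rw [h3] at hsplit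
      rw [h1, h2]
      linarith
    intro u b
    cases b
    · exact (key u).symm
    · exact key u
  -- fiberwise decomposition of the sum over S
  set gIn : V × V → V × Bool := fun d => (d.2, c s(d.1, d.2)) with hgIn_def
  set gOut : V × V → V × Bool := fun d => (d.1, c s(d.1, d.2)) with hgOut_def
  have hsumIn : ∑ p : V × Bool, ∑ d ∈ S.filter (fun d => gIn d = p), f d = ∑ d ∈ S, f d :=
    Finset.sum_fiberwise S gIn f
  have hsumOut : ∑ p : V × Bool, ∑ d ∈ S.filter (fun d => gOut d = p), f d = ∑ d ∈ S, f d :=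
    Finset.sum_fiberwise S gOut f
  have hsumOut' : ∑ p : V × Bool, ∑ d ∈ S.filter (fun d => gOut d = (p.1, !p.2)), f d
      = ∑ d ∈ S, f d := by
    rw [← hsumOut]
    exact Fintype.sum_bijective (fun p : V × Bool => (p.1, !p.2))
      (Function.Involutive.bijective fun p => by simp) _ _ (fun p => rfl)
  -- the termwise inequality
  have hle : ∀ p : V × Bool,
      ∑ d ∈ S.filter (fun d => gIn d = p), f d
        ≤ ∑ d ∈ S.filter (fun d => gOut d = (p.1, !p.2)), f d := by
    rintro ⟨u, b⟩
    by_cases hne : (S.filter (fun d => gIn d = (u, b))).Nonempty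
    · obtain ⟨d, hd⟩ := hne
      rw [Finset.mem_filter] at hd
      obtain ⟨hdS, hdg⟩ := hd
      have hd2 : d.2 = u := congrArg Prod.fst hdg
      have hdc : c s(d.1, d.2) = b := congrArg Prod.snd hdg
      -- the out-fiber is exactly all (!b)-edges out of u
      have hOutEq : S.filter (fun d => gOut d = (u, !b))
          = ((G.neighborFinset u).filter (fun y => c s(u, y) = !b)).image (fun y => (u, y)) := by
        ext d'
        simp only [Finset.mem_filter, Finset.mem_image, SimpleGraph.mem_neighborFinset]
        constructor
        · rintro ⟨hd'S, hd'g⟩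
          have h1 : d'.1 = u := congrArg Prod.fst hd'g
          have h2 : c s(d'.1, d'.2) = !b := congrArg Prod.snd hd'g
          have hadj : G.Adj d'.1 d'.2 := by
            simp only [hS_def, Finset.mem_filter] at hd'S
            exact hd'S.2.1
          exact ⟨d'.2, ⟨h1 ▸ hadj, h1 ▸ h2⟩, by rw [← h1]⟩
        · rintro ⟨y, ⟨hy, hcy⟩, rfl⟩
          refine ⟨hSclosed d hdS (u, y) ⟨hd2, hy, ?_⟩, ?_⟩
          · rw [hdc, hcy]; simp
          · simp [hgOut_def, hcy]
      have hInSub : S.filter (fun d => gIn d = (u, b))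
          ⊆ ((G.neighborFinset u).filter (fun y => c s(u, y) = b)).image (fun y => (y, u)) := by
        intro d' hd'
        rw [Finset.mem_filter] at hd'
        obtain ⟨hd'S, hd'g⟩ := hd'
        have h1 : d'.2 = u := congrArg Prod.fst hd'g
        have h2 : c s(d'.1, d'.2) = b := congrArg Prod.snd hd'g
        have hadj : G.Adj d'.1 d'.2 := by
          simp only [hS_def, Finset.mem_filter] at hd'S
          exact hd'S.2.1
        simp only [Finset.mem_image, Finset.mem_filter, SimpleGraph.mem_neighborFinset]
        refine ⟨d'.1, ⟨(h1 ▸ hadj).symm, ?_⟩, by rw [← h1]⟩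
        rw [Sym2.eq_swap]; rw [h1] at h2; exact h2
      have hinj1 : ∀ y₁ ∈ (G.neighborFinset u).filter (fun y => c s(u, y) = b),
          ∀ y₂ ∈ (G.neighborFinset u).filter (fun y => c s(u, y) = b),
            (fun y => (y, u)) y₁ = (fun y => (y, u)) y₂ → y₁ = y₂ := by
        intro y₁ _ y₂ _ h; exact congrArg Prod.fst h
      have hinj2 : ∀ y₁ ∈ (G.neighborFinset u).filter (fun y => c s(u, y) = !b),
          ∀ y₂ ∈ (G.neighborFinset u).filter (fun y => c s(u, y) = !b),
            (fun y => ((u, y) : V × V)) y₁ = (fun y => (u, y)) y₂ → y₁ = y₂ := by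
        intro y₁ _ y₂ _ h; exact congrArg Prod.snd h
      calc ∑ d ∈ S.filter (fun d => gIn d = (u, b)), f d
          ≤ ∑ d' ∈ ((G.neighborFinset u).filter (fun y => c s(u, y) = b)).image
              (fun y => (y, u)), f d' :=
            Finset.sum_le_sum_of_subset_of_nonneg hInSub (fun d' _ _ => hf0 d')
        _ = ∑ y ∈ (G.neighborFinset u).filter (fun y => c s(u, y) = b), f (y, u) :=
            Finset.sum_image hinj1
        _ = ∑ y ∈ (G.neighborFinset u).filter (fun y => c s(u, y) = b), |w s(u, y)| := by
            refine Finset.sum_congr rfl fun y _ => ?_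
            simp only [hf_def]; rw [Sym2.eq_swap]
        _ = ∑ y ∈ (G.neighborFinset u).filter (fun y => c s(u, y) = !b), |w s(u, y)| := hW u b
        _ = ∑ y ∈ (G.neighborFinset u).filter (fun y => c s(u, y) = !b), f (u, y) := rfl
        _ = ∑ d' ∈ ((G.neighborFinset u).filter (fun y => c s(u, y) = !b)).image
              (fun y => ((u, y) : V × V)), f d' := (Finset.sum_image hinj2).symm
        _ = ∑ d ∈ S.filter (fun d => gOut d = (u, !b)), f d := by rw [hOutEq]
    · rw [Finset.not_nonempty_iff_eq_empty] at hne
      rw [hne, Finset.sum_empty]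
      exact Finset.sum_nonneg fun d _ => hf0 d
  -- hence termwise equality
  have heqt : ∀ p : V × Bool,
      ∑ d ∈ S.filter (fun d => gIn d = p), f d
        = ∑ d ∈ S.filter (fun d => gOut d = (p.1, !p.2)), f d := by
    have := (Finset.sum_eq_sum_iff_of_le (s := (Finset.univ : Finset (V × Bool)))
      (fun p _ => hle p)).mp (by rw [hsumIn, hsumOut'])
    exact fun p => this p (Finset.mem_univ p)
  -- the out-sum at (a, b₀) is positive
  have hfd₀ : 0 < f d₀ := by
    rw [hf_def]
    simp only [hd₀_def]
    rw [abs_pos]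
    cases hcb : c s(a, bv)
    · exact ne_of_lt (hblue _ he hcb)
    · exact ne_of_gt (hred _ he hcb)
  have hd₀Out : d₀ ∈ S.filter (fun d => gOut d = (a, !(!b₀))) := by
    rw [Finset.mem_filter]
    refine ⟨hd₀S, ?_⟩
    simp only [Bool.not_not]
    rfl
  have hpos : 0 < ∑ d ∈ S.filter (fun d => gIn d = (a, !b₀)), f d := by
    rw [heqt (a, !b₀)]
    calc (0 : ℝ) < f d₀ := hfd₀
      _ ≤ _ := Finset.single_le_sum (fun d _ => hf0 d) hd₀Out
  -- hence there is a state d₁ ∈ S into a with color !b₀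
  have hne : (S.filter (fun d => gIn d = (a, !b₀))).Nonempty := by
    by_contra h
    rw [Finset.not_nonempty_iff_eq_empty] at h
    rw [h, Finset.sum_empty] at hpos
    exact lt_irrefl _ hpos
  obtain ⟨d₁, hd₁⟩ := hne
  rw [Finset.mem_filter] at hd₁
  obtain ⟨hd₁S, hd₁g⟩ := hd₁
  have hd₁2 : d₁.2 = a := congrArg Prod.fst hd₁g
  have hd₁c : c s(d₁.1, d₁.2) = !b₀ := congrArg Prod.snd hd₁g
  have hreach : Relation.ReflTransGen step d₀ d₁ := by
    simp only [hS_def, Finset.mem_filter] at hd₁S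
    exact hd₁S.2.2
  have hstep₁ : step d₁ d₀ := by
    refine ⟨hd₁2, he, ?_⟩
    rw [hd₁c]
    simp [hb₀]
    rfl
  -- build the walk by induction on reachability
  have key : ∀ d, Relation.ReflTransGen step d₀ d →
      ∃ p : G.Walk a d.2,
        List.Chain' (fun e f => c e ≠ c f) p.edges ∧
        p.edges.head? = some s(a, bv) ∧ p.edges.getLast? = some s(d.1, d.2) := by
    intro d hd
    induction hd with
    | refl =>
      exact ⟨SimpleGraph.Walk.cons he SimpleGraph.Walk.nil, List.isChain_singleton _, by simp, rfl⟩
    | tail hbc hcd ih =>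
      rename_i b' c' _
      obtain ⟨p, hchain, hhead, hlast⟩ := ih
      obtain ⟨h1, h2, h3⟩ := hcd
      obtain ⟨u', y⟩ := c'
      simp only at h1 h2 h3 ⊢
      subst h1
      have hpne : p.edges ≠ [] := by
        intro hnil; rw [hnil] at hhead; simp at hhead
      refine ⟨p.append (SimpleGraph.Walk.cons h2 SimpleGraph.Walk.nil), ?_, ?_, ?_⟩
      · rw [SimpleGraph.Walk.edges_append, SimpleGraph.Walk.edges_cons,
          SimpleGraph.Walk.edges_nil]
        show List.IsChain _ _; rw [List.isChain_append]
        refine ⟨hchain, List.isChain_singleton _, ?_⟩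
        intro x hx y' hy'
        simp only [List.head?_cons, Option.mem_def, Option.some.injEq] at hy'
        rw [Option.mem_def, hlast, Option.some.injEq] at hx
        subst hx; subst hy'
        exact h3
      · rw [SimpleGraph.Walk.edges_append, SimpleGraph.Walk.edges_cons,
          SimpleGraph.Walk.edges_nil]
        rw [List.head?_append_of_ne_nil _ hpne]
        exact hhead
      · rw [SimpleGraph.Walk.edges_append, SimpleGraph.Walk.edges_cons,
          SimpleGraph.Walk.edges_nil]
        exact List.getLast?_concat
  obtain ⟨p, hchain, hhead, hlast⟩ := key d₁ hreach
  obtain ⟨x₁, u₁⟩ := d₁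
  simp only at hd₁2 hd₁c hlast
  subst hd₁2
  have hpne : p.edges ≠ [] := by
    intro hnil; rw [hnil] at hhead; simp at hhead
  have hhead' : ∀ h : p.edges ≠ [], p.edges.head h = s(u₁, bv) := by
    intro h; rwa [List.head?_eq_head h, Option.some.injEq] at hhead
  have hlast' : ∀ h : p.edges ≠ [], p.edges.getLast h = s(x₁, u₁) := by
    intro h; rwa [List.getLast?_eq_getLast h, Option.some.injEq] at hlast
  refine ⟨u₁, p, ⟨hpne, hchain, ?_⟩, ?_⟩
  · intro h
    rw [hlast' h, hhead' h, hd₁c]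
    simp [hb₀]
  · have := List.head_mem hpne
    rwa [hhead' hpne] at this
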